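/- Let f : ℝ → ℝ be continuous and satisfy the exponential decay estimates with constants C₁, C₂, α, β > 0, and let n be a natural number. Then for every ω ∈ ℂ with −α < Im ω < β, the n-th complex derivative of F(f) exists at ω and F(t^n·f(t))(ω) = (−i)^n·(d^n/dω^n)F(f)(ω), where F(t^n·f(t))(ω) = ∫_{−∞}^{∞} t^n·exp(i·ω·t)·f(t) dt. -/

import Mathlib

open MeasureTheory Real Set

private lemma exp_abs_integrable' {c : ℝ} (hc : 0 < c) :
    Integrable (fun t : ℝ => Real.exp (-c * |t|)) := by
  rw [← integrableOn_univ, ← @Iio_union_Ici _ _ (0 : ℝ), integrableOn_union,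
    integrableOn_Ici_iff_integrableOn_Ioi]
  have hIoi : IntegrableOn (fun t : ℝ => Real.exp (-c * |t|)) (Ioi 0) :=
    (exp_neg_integrableOn_Ioi 0 hc).congr_fun
      (fun t ht => by rw [abs_of_pos ht]) measurableSet_Ioi
  refine ⟨?_, hIoi⟩
  rw [← (Measure.measurePreserving_neg (volume : Measure ℝ)).integrableOn_comp_preimage
      (Homeomorph.neg ℝ).measurableEmbedding]
  simpa only [Function.comp_def, abs_neg, neg_preimage, neg_Iio, neg_zero] using hIoi

private lemma pow_le_exp_aux' (k : ℕ) {δ : ℝ} (hδ : 0 < δ) (t : ℝ) :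
    |t| ^ k ≤ (k.factorial : ℝ) * (2 / δ) ^ k * Real.exp (δ / 2 * |t|) := by
  have h := Real.pow_div_factorial_le_exp (x := δ / 2 * |t|) (by positivity) k
  have h2 : (δ / 2 * |t|) ^ k ≤ (k.factorial : ℝ) * Real.exp (δ / 2 * |t|) :=
    ((div_le_iff₀ (by positivity)).mp h).trans_eq (mul_comm _ _)
  calc |t| ^ k = (2 / δ) ^ k * (δ / 2 * |t|) ^ k := by
        rw [← mul_pow]; congr 1; field_simp
    _ ≤ (2 / δ) ^ k * ((k.factorial : ℝ) * Real.exp (δ / 2 * |t|)) :=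
        mul_le_mul_of_nonneg_left h2 (by positivity)
    _ = (k.factorial : ℝ) * (2 / δ) ^ k * Real.exp (δ / 2 * |t|) := by ring

theorem fourier_bicomplex_iterated_deriv
    (f : ℝ → ℝ) (C₁ C₂ α β : ℝ) (n : ℕ)
    (hC₁ : 0 < C₁) (hC₂ : 0 < C₂) (hα : 0 < α) (hβ : 0 < β)
    (hf : Continuous f)
    (h₁ : ∀ t : ℝ, 0 ≤ t → |f t| ≤ C₁ * Real.exp (-α * t))
    (h₂ : ∀ t : ℝ, t ≤ 0 → |f t| ≤ C₂ * Real.exp (β * t))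
    (ω : ℂ) (hω₁ : -α < ω.im) (hω₂ : ω.im < β) :
    ContDiffAt ℂ n
        (fun z : ℂ => ∫ t : ℝ, Complex.exp (Complex.I * z * t) * (f t : ℂ)) ω ∧
      (∫ t : ℝ, (t : ℂ) ^ n * Complex.exp (Complex.I * ω * t) * (f t : ℂ)) =
        (-Complex.I) ^ n *
          iteratedDeriv n
            (fun z : ℂ => ∫ t : ℝ, Complex.exp (Complex.I * z * t) * (f t : ℂ)) ω := by
  set S : Set ℂ := {z : ℂ | -α < z.im ∧ z.im < β} with hSdef
  have hSopen : IsOpen S := by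
    have : S = Complex.im ⁻¹' Ioo (-α) β := by ext z; simp [hSdef, Ioo, mem_setOf_eq]
    rw [this]; exact isOpen_Ioo.preimage Complex.continuous_im
  have hωS : ω ∈ S := ⟨hω₁, hω₂⟩
  -- pointwise bound
  have hfb : ∀ (k : ℕ) (δ : ℝ), 0 < δ → ∀ (c t : ℝ), δ ≤ α + c → δ ≤ β - c →
      |t| ^ k * (Real.exp (-c * t) * |f t|) ≤
        ((C₁ + C₂) * ((k.factorial : ℝ) * (2 / δ) ^ k)) * Real.exp (-(δ / 2) * |t|) := by
    intro k δ hδ c t hac hbc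
    have step1 : Real.exp (-c * t) * |f t| ≤ (C₁ + C₂) * Real.exp (-δ * |t|) := by
      rcases le_or_gt 0 t with ht | ht
      · calc Real.exp (-c * t) * |f t| ≤ Real.exp (-c * t) * (C₁ * Real.exp (-α * t)) :=
              mul_le_mul_of_nonneg_left (h₁ t ht) (Real.exp_pos _).le
        _ = C₁ * Real.exp (-(α + c) * t) := by
              rw [mul_left_comm, ← Real.exp_add]; congr 1; ring
        _ ≤ (C₁ + C₂) * Real.exp (-δ * |t|) := by
              rw [abs_of_nonneg ht]
              exact mul_le_mul (by linarith) (Real.exp_le_exp.2 (by nlinarith))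
                (Real.exp_pos _).le (by linarith)
      · calc Real.exp (-c * t) * |f t| ≤ Real.exp (-c * t) * (C₂ * Real.exp (β * t)) :=
              mul_le_mul_of_nonneg_left (h₂ t ht.le) (Real.exp_pos _).le
        _ = C₂ * Real.exp ((β - c) * t) := by
              rw [mul_left_comm, ← Real.exp_add]; congr 1; ring
        _ ≤ (C₁ + C₂) * Real.exp (-δ * |t|) := by
              rw [abs_of_neg ht]
              exact mul_le_mul (by linarith) (Real.exp_le_exp.2 (by nlinarith))
                (Real.exp_pos _).le (by linarith)
    have he : Real.exp (δ / 2 * |t|) * Real.exp (-δ * |t|) = Real.exp (-(δ / 2) * |t|) := by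
      rw [← Real.exp_add]; congr 1; ring
    calc |t| ^ k * (Real.exp (-c * t) * |f t|)
        ≤ ((k.factorial : ℝ) * (2 / δ) ^ k * Real.exp (δ / 2 * |t|)) *
            ((C₁ + C₂) * Real.exp (-δ * |t|)) :=
          mul_le_mul (pow_le_exp_aux' k hδ t) step1 (by positivity) (by positivity)
      _ = ((C₁ + C₂) * ((k.factorial : ℝ) * (2 / δ) ^ k)) * Real.exp (-(δ / 2) * |t|) := by
          rw [mul_mul_mul_comm, he]; ring
  -- norm of the integrand
  have hnorm : ∀ (k : ℕ) (z : ℂ) (t : ℝ),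
      ‖(Complex.I * t) ^ k * Complex.exp (Complex.I * z * t) * (f t : ℂ)‖ =
        |t| ^ k * (Real.exp (-z.im * t) * |f t|) := by
    intro k z t
    have hre : (Complex.I * z * (t : ℂ)).re = -z.im * t := by
      simp [Complex.mul_re, Complex.mul_im]
    simp only [norm_mul, norm_pow, Complex.norm_exp,
      Complex.norm_I, Complex.norm_real, Real.norm_eq_abs, one_pow, one_mul, hre]
    ring
  -- continuity
  have hcont : ∀ (k : ℕ) (z : ℂ), Continuous
      (fun t : ℝ => (Complex.I * t) ^ k * Complex.exp (Complex.I * z * t) * (f t : ℂ)) := by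
    intro k z
    apply Continuous.mul
    apply Continuous.mul
    · exact (continuous_const.mul Complex.continuous_ofReal).pow k
    · exact Complex.continuous_exp.comp ((continuous_const.mul Complex.continuous_ofReal))
    · exact Complex.continuous_ofReal.comp hf
  -- integrability
  have hinteg : ∀ (k : ℕ) (z : ℂ), z ∈ S → Integrable
      (fun t : ℝ => (Complex.I * t) ^ k * Complex.exp (Complex.I * z * t) * (f t : ℂ)) := by
    intro k z hz
    obtain ⟨hz1, hz2⟩ := hz
    set δ : ℝ := min (α + z.im) (β - z.im) with hδdef
    have hδ : 0 < δ := lt_min (by linarith) (by linarith)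
    apply Integrable.mono'
      ((exp_abs_integrable' (half_pos hδ)).const_mul
        ((C₁ + C₂) * ((k.factorial : ℝ) * (2 / δ) ^ k)))
      (hcont k z).aestronglyMeasurable
    filter_upwards with t
    rw [hnorm]
    exact hfb k δ hδ z.im t (min_le_left _ _) (min_le_right _ _)
  -- pointwise derivative
  have hd : ∀ (k : ℕ) (t : ℝ) (w : ℂ),
      HasDerivAt (fun w : ℂ => (Complex.I * t) ^ k * Complex.exp (Complex.I * w * t) * (f t : ℂ))
        ((Complex.I * t) ^ (k + 1) * Complex.exp (Complex.I * w * t) * (f t : ℂ)) w := by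
    intro k t w
    have h1 : HasDerivAt (fun w : ℂ => Complex.I * w * (t : ℂ)) (Complex.I * t) w := by
      simpa using ((hasDerivAt_id w).const_mul Complex.I).mul_const (t : ℂ)
    have h3 := (h1.cexp.const_mul ((Complex.I * t) ^ k)).mul_const ((f t : ℂ))
    refine h3.congr_deriv ?_
    ring
  -- derivative of the parametric integral
  have hderiv : ∀ (k : ℕ) (z : ℂ), z ∈ S →
      HasDerivAt (fun w : ℂ => ∫ t : ℝ,
          (Complex.I * t) ^ k * Complex.exp (Complex.I * w * t) * (f t : ℂ))
        (∫ t : ℝ, (Complex.I * t) ^ (k + 1) * Complex.exp (Complex.I * z * t) * (f t : ℂ)) z := by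
    intro k z hz
    obtain ⟨hz1, hz2⟩ := hz
    set δ : ℝ := min (α + z.im) (β - z.im) with hδdef
    have hδ : 0 < δ := lt_min (by linarith) (by linarith)
    have hδ2 : 0 < δ / 2 := half_pos hδ
    have H := hasDerivAt_integral_of_dominated_loc_of_deriv_le (μ := volume)
      (F := fun w t => (Complex.I * t) ^ k * Complex.exp (Complex.I * w * t) * (f t : ℂ))
      (F' := fun w t => (Complex.I * t) ^ (k + 1) * Complex.exp (Complex.I * w * t) * (f t : ℂ))
      (x₀ := z) (s := Metric.ball z (δ / 2))
      (bound := fun t => ((C₁ + C₂) * (((k + 1).factorial : ℝ) * (2 / (δ / 2)) ^ (k + 1))) *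
        Real.exp (-(δ / 2 / 2) * |t|)) (Metric.ball_mem_nhds z hδ2)
      (Filter.Eventually.of_forall fun w => (hcont k w).aestronglyMeasurable)
      (hinteg k z ⟨hz1, hz2⟩)
      (hcont (k + 1) z).aestronglyMeasurable
      ?_
      ((exp_abs_integrable' (half_pos hδ2)).const_mul _)
      (Filter.Eventually.of_forall fun t => fun w _ => hd k t w)
    · exact H.2
    · filter_upwards with t
      intro w hw
      rw [hnorm]
      have him : |w.im - z.im| ≤ dist w z := by
        rw [Complex.dist_eq]
        simpa [Complex.sub_im] using Complex.abs_im_le_norm (w - z)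
      have hwz : dist w z < δ / 2 := Metric.mem_ball.mp hw
      have h1 : δ / 2 ≤ α + w.im := by
        have := abs_le.mp him
        have hδa : δ ≤ α + z.im := min_le_left _ _
        linarith [this.1, this.2]
      have h2 : δ / 2 ≤ β - w.im := by
        have := abs_le.mp him
        have hδb : δ ≤ β - z.im := min_le_right _ _
        linarith [this.1, this.2]
      exact hfb (k + 1) (δ / 2) hδ2 w.im t h1 h2
  -- rewrite the target function
  have hΦ : (fun z : ℂ => ∫ t : ℝ, Complex.exp (Complex.I * z * t) * (f t : ℂ)) =
      fun z : ℂ => ∫ t : ℝ, (Complex.I * t) ^ 0 * Complex.exp (Complex.I * z * t) * (f t : ℂ) := by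
    funext z; simp
  -- iterated derivative
  have hiter : ∀ (k : ℕ), ∀ z ∈ S,
      iteratedDeriv k (fun z : ℂ => ∫ t : ℝ,
          (Complex.I * t) ^ 0 * Complex.exp (Complex.I * z * t) * (f t : ℂ)) z =
        ∫ t : ℝ, (Complex.I * t) ^ k * Complex.exp (Complex.I * z * t) * (f t : ℂ) := by
    intro k
    induction k with
    | zero => intro z _; rw [iteratedDeriv_zero]
    | succ k ih =>
      intro z hz
      rw [iteratedDeriv_succ]
      have hev : iteratedDeriv k (fun z : ℂ => ∫ t : ℝ,
          (Complex.I * t) ^ 0 * Complex.exp (Complex.I * z * t) * (f t : ℂ)) =ᶠ[nhds z]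
          fun w : ℂ => ∫ t : ℝ, (Complex.I * t) ^ k * Complex.exp (Complex.I * w * t) * (f t : ℂ) := by
        filter_upwards [hSopen.mem_nhds hz] with w hw using ih w hw
      rw [hev.deriv_eq]
      exact (hderiv k z hz).deriv
  constructor
  · rw [hΦ]
    have hdiffOn : DifferentiableOn ℂ (fun z : ℂ => ∫ t : ℝ,
        (Complex.I * t) ^ 0 * Complex.exp (Complex.I * z * t) * (f t : ℂ)) S :=
      fun z hz => ((hderiv 0 z hz).differentiableAt).differentiableWithinAt
    exact (hdiffOn.analyticAt (hSopen.mem_nhds hωS)).contDiffAt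
  · rw [hΦ, hiter n ω hωS]
    have hptw : ∀ t : ℝ, (Complex.I * t) ^ n * Complex.exp (Complex.I * ω * t) * (f t : ℂ) =
        Complex.I ^ n * ((t : ℂ) ^ n * Complex.exp (Complex.I * ω * t) * (f t : ℂ)) := by
      intro t; rw [mul_pow]; ring
    simp_rw [hptw]
    rw [integral_const_mul, ← mul_assoc, ← mul_pow]
    simp [Complex.I_mul_I]
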